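/- Let G = H □ K₂^{□t} and let (G,p) be a bar-joint framework in ℝ^d with t-fold extrusion symmetry with extrusion directions τ₁,…,τ_t, and let θ: ℤ₂^t → Aut(G) be the extrusion action. Then the rigidity matrix R(G,p) is a ℤ₂^t-linear map of the external and internal representations, i.e. R(G,p)·(P_V ⊗ I_d)(γ) = P′_E(γ)·R(G,p) for every γ ∈ ℤ₂^t. -/
import Mathlib


/-!
STATEMENT 0: For a bar-joint framework `(G,p)` in `ℝ^d` with `t`-fold extrusion symmetry,
where `G = H □ K₂^{□t}`, the rigidity matrix intertwines the external representation
`P_V ⊗ I_d` and the internal (signed edge permutation) representation `P′_E` of `ℤ₂^t`: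
`R(G,p)·(P_V ⊗ I_d)(γ) = P′_E(γ)·R(G,p)` for every `γ`.

This is expressed row-wise: for every edge `{i,j}` of `G`, every `γ ∈ ℤ₂^t` and every
velocity assignment `q`, the `{i,j}`-entry of `R(G,p)` applied to `(P_V ⊗ I_d)(γ) q`
equals the sign `intSign γ i j` (the `(e, γe)`-entry of `P′_E(γ)`) times the
`γ{i,j}`-entry of `R(G,p)` applied to `q`.
-/

open Matrix
open scoped Classical

/-- The group `ℤ₂^t`. -/
abbrev Zkt (t : ℕ) := Fin t → ZMod 2

/-- The vertex set of `G = H □ K₂^{□t}`, where `VH` is the vertex set of `H`. -/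
abbrev Vert (VH : Type*) (t : ℕ) := VH × Zkt t

/-- The extrusion action of `γ ∈ ℤ₂^t` on the vertices of `G = H □ K₂^{□t}`:
`θ(γ)(v,e) = (v, e + γ)`. -/
def theta {VH : Type*} {t : ℕ} (γ : Zkt t) (i : Vert VH t) : Vert VH t :=
  (i.1, i.2 + γ)

/-- Adjacency in the Cartesian product `G = H □ K₂^{□t}`: two vertices are adjacent iff
they are at the same level `e` and adjacent in `H`, or they are copies of the same
vertex of `H` at levels differing in exactly one coordinate. -/
def ExtAdj {VH : Type*} {t : ℕ} (Adj : VH → VH → Prop) (i j : Vert VH t) : Prop :=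
  (Adj i.1 j.1 ∧ i.2 = j.2) ∨
    (i.1 = j.1 ∧ ∃ h, i.2 h ≠ j.2 h ∧ ∀ h', h' ≠ h → i.2 h' = j.2 h')

/-- `t`-fold extrusion symmetry of a bar-joint framework `(G,p)` in `ℝ^d` with
extrusion directions `τ₁, …, τ_t ∈ ℝ^d \ {0}`:  `p(v,e) = p(v,𝟎) + T·eᵀ`. -/
def ExtrusionSymmetric {VH : Type*} {t d : ℕ} (τ : Fin t → Fin d → ℝ)
    (p : Vert VH t → Fin d → ℝ) : Prop :=
  (∀ h, τ h ≠ 0) ∧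
    ∀ (v : VH) (e : Zkt t), p (v, e) = p (v, 0) + ∑ h, (((e h).val : ℝ)) • τ h

/-- The sign attached by the internal representation `P′_E(γ)` to an edge `{i,j}`:
it is `-1` exactly when `i = (v,𝐞)`, `j = (v,𝐞′)` differ in one coordinate `h`
and `γ` has a `1` in the `h`-th coordinate, and `+1` otherwise. -/
noncomputable def intSign {VH : Type*} {t : ℕ} (γ : Zkt t) (i j : Vert VH t) : ℝ :=
  ∏ h, (-1 : ℝ) ^ ((i.2 h + j.2 h).val * (γ h).val)

/-- **Theorem 2.3**: the rigidity matrix of a `t`-fold extrusion-symmetric framework is a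
`ℤ₂^t`-linear map of the external and internal representations. -/

private lemma zmod2_cases (a : ZMod 2) : a = 0 ∨ a = 1 := by revert a; decide

private lemma zmod2_ne_add {a b : ZMod 2} (h : a ≠ b) : a + b = 1 := by
  revert h; revert a b; decide

private lemma pdiff {VH : Type*} {t d : ℕ} {τ : Fin t → Fin d → ℝ}
    {p : Vert VH t → Fin d → ℝ} (hp : ExtrusionSymmetric τ p)
    (v w : VH) (e e' : Zkt t) :
    p (v, e) - p (w, e') =
      (p (v, 0) - p (w, 0)) + ∑ h, ((((e h).val : ℝ) - ((e' h).val : ℝ)) • τ h) := by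
  rw [hp.2 v e, hp.2 w e']
  simp only [sub_smul, Finset.sum_sub_distrib]
  abel

/-- **Theorem 2.3**: the rigidity matrix of a `t`-fold extrusion-symmetric framework is a
`ℤ₂^t`-linear map of the external and internal representations. -/
theorem rigidity_intertwines_extrusion_reps
    {VH : Type*} [Fintype VH] {t d : ℕ}
    (Adj : VH → VH → Prop) (hAdjSymm : ∀ u v, Adj u v → Adj v u)
    (τ : Fin t → Fin d → ℝ) (p : Vert VH t → Fin d → ℝ)
    (hp : ExtrusionSymmetric τ p) :
    ∀ (γ : Zkt t) (q : Vert VH t → Fin d → ℝ) (i j : Vert VH t), ExtAdj Adj i j →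
      (p i - p j) ⬝ᵥ (q (theta γ i) - q (theta γ j)) =
        intSign γ i j *
          ((p (theta γ i) - p (theta γ j)) ⬝ᵥ (q (theta γ i) - q (theta γ j))) := by
  rintro γ q i j (⟨hA, hE⟩ | ⟨hV, h₀, hne, hrest⟩)
  · obtain ⟨v, e⟩ := i
    obtain ⟨w, e'⟩ := j
    simp only at hE
    subst hE
    have hsign : intSign γ (v, e) (w, e) = 1 := by
      unfold intSign
      simp [CharTwo.add_self_eq_zero]
    have k1 := pdiff hp v w e e
    have k2 := pdiff hp v w (e + γ) (e + γ)
    simp only [sub_self, zero_smul, Finset.sum_const_zero, add_zero] at k1 k2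
    have key : p (v, e) - p (w, e) = p (theta γ (v, e)) - p (theta γ (w, e)) :=
      k1.trans k2.symm
    rw [hsign, one_mul, key]
  · obtain ⟨v, e⟩ := i
    obtain ⟨w, e'⟩ := j
    simp only at hV hne hrest
    subst hV
    have hsign : intSign γ (v, e) (v, e') = (-1 : ℝ) ^ (γ h₀).val := by
      show (∏ h, (-1 : ℝ) ^ ((e h + e' h).val * (γ h).val)) = _
      rw [Finset.prod_eq_single h₀]
      · rw [zmod2_ne_add hne, show ZMod.val (1 : ZMod 2) = 1 from rfl, one_mul]
      · intro h _ hh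
        rw [hrest h hh, CharTwo.add_self_eq_zero]
        simp
      · simp
    have hd1 : p (v, e) - p (v, e') =
        (((e h₀).val : ℝ) - ((e' h₀).val : ℝ)) • τ h₀ := by
      rw [pdiff hp, sub_self, zero_add]
      rw [Finset.sum_eq_single h₀]
      · intro h _ hh
        rw [hrest h hh]
        simp
      · simp
    have hd2 : p (theta γ (v, e)) - p (theta γ (v, e')) =
        ((((e + γ) h₀).val : ℝ) - (((e' + γ) h₀).val : ℝ)) • τ h₀ := by
      show p (v, e + γ) - p (v, e' + γ) = _
      rw [pdiff hp, sub_self, zero_add]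
      rw [Finset.sum_eq_single h₀]
      · intro h _ hh
        have he : (e + γ) h = (e' + γ) h := by
          simp [Pi.add_apply, hrest h hh]
        rw [he]
        simp
      · simp
    have hscal : (((e h₀).val : ℝ) - ((e' h₀).val : ℝ)) =
        (-1 : ℝ) ^ (γ h₀).val *
          ((((e + γ) h₀).val : ℝ) - (((e' + γ) h₀).val : ℝ)) := by
      simp only [Pi.add_apply]
      rcases zmod2_cases (e h₀) with h1 | h1 <;>
        rcases zmod2_cases (e' h₀) with h2 | h2 <;>
        rcases zmod2_cases (γ h₀) with h3 | h3 <;>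
        first
          | (exact absurd (h1.trans h2.symm) hne)
          | (rw [h1, h2, h3]
             simp only [show ((1 : ZMod 2) + 1) = 0 from by decide,
               show ((0 : ZMod 2) + 1) = 1 from by decide,
               show ((0 : ZMod 2) + 0) = 0 from by decide,
               show ((1 : ZMod 2) + 0) = 1 from by decide,
               show ZMod.val (0 : ZMod 2) = 0 from rfl,
               show ZMod.val (1 : ZMod 2) = 1 from rfl]
             norm_num)
    rw [hsign, hd1, hd2, hscal, smul_dotProduct, smul_dotProduct,
      smul_eq_mul, smul_eq_mul, mul_assoc]
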